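/- The ℚ-linear map ζ* on the ℚ-span of convergent words, defined by ζ*(𝟙) = 1 for the empty word 𝟙 and ζ*(z_{k₁}⋯z_{kₙ}) = ζ(k₁,…,kₙ) for nonempty convergent words, is an algebra morphism for the quasi-shuffle product: for all convergent words u and v, the element u ∗ v is a linear combination of convergent words and ζ*(u ∗ v) = ζ*(u)·ζ*(v). -/

import Mathlib

/-- The quasi-shuffle (stuffle) product on the free `ℚ`-module with basis the words
(lists of positive integers), defined on basis words by
`𝟙 ∗ w = w ∗ 𝟙 = w` and
`z_m u ∗ z_n v = z_m (u ∗ z_n v) + z_n (z_m u ∗ v) + z_{m+n} (u ∗ v)`. -/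
noncomputable def qsh : List ℕ+ → List ℕ+ → (List ℕ+ →₀ ℚ)
  | [], w => Finsupp.single w 1
  | v, [] => Finsupp.single v 1
  | m :: u, n :: v =>
      Finsupp.mapDomain (fun w => m :: w) (qsh u (n :: v)) +
      Finsupp.mapDomain (fun w => n :: w) (qsh (m :: u) v) +
      Finsupp.mapDomain (fun w => (m + n) :: w) (qsh u v)
  termination_by u v => u.length + v.length
  decreasing_by all_goals (simp [List.length]; try omega)

/-- A word is convergent when it is empty or its first letter is at least 2. -/
def ConvergentWord (w : List ℕ+) : Prop := ∀ k ∈ w.head?, 2 ≤ (k : ℕ)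

/-- The multiple zeta value of a word `z_{k₁} ⋯ z_{kₙ}`:
`ζ(k₁,…,kₙ) = Σ_{m₁ > ⋯ > mₙ ≥ 1} m₁^{-k₁} ⋯ mₙ^{-kₙ}` (for the empty word this is `1`). -/
noncomputable def mzvWord (w : List ℕ+) : ℝ :=
  ∑' m : {m : Fin w.length → ℕ // StrictAnti m ∧ ∀ i, 1 ≤ m i},
    ∏ i, (1 : ℝ) / ((m.1 i : ℕ) : ℝ) ^ ((w.get i : ℕ))

/-- The `ℚ`-linear map `ζ* ` on the span of words, sending a word to its multiple zeta
value (and the empty word `𝟙` to `1`). -/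
noncomputable def zetaStar (f : List ℕ+ →₀ ℚ) : ℝ :=
  f.sum fun w c => (c : ℝ) * mzvWord w

namespace ZQ

open Finset

noncomputable def term (w : List ℕ+) (m : Fin w.length → ℕ) : ℝ :=
  ∏ i, (1 : ℝ) / ((m i : ℕ) : ℝ) ^ ((w.get i : ℕ))

def Good (w : List ℕ+) (m : Fin w.length → ℕ) : Prop := StrictAnti m ∧ ∀ i, 1 ≤ m i

noncomputable def DS (N : ℕ) (w : List ℕ+) : Finset (Fin w.length → ℕ) := by
  classical
  exact (Fintype.piFinset fun _ => Finset.range N).filter (Good w)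

lemma mem_DS {N : ℕ} {w : List ℕ+} {m : Fin w.length → ℕ} :
    m ∈ DS N w ↔ StrictAnti m ∧ (∀ i, 1 ≤ m i) ∧ ∀ i, m i < N := by
  classical
  simp [DS, Good, Fintype.mem_piFinset, Finset.mem_range, and_assoc]
  tauto

noncomputable def Zr (N : ℕ) (w : List ℕ+) : ℝ := ∑ m ∈ DS N w, term w m

lemma term_nonneg (w : List ℕ+) (m : Fin w.length → ℕ) : 0 ≤ term w m := by
  apply Finset.prod_nonneg; intro i _; positivity

lemma Zr_nonneg (N : ℕ) (w : List ℕ+) : 0 ≤ Zr N w :=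
  Finset.sum_nonneg fun m _ => term_nonneg w m

lemma Zr_nil (N : ℕ) : Zr N [] = 1 := by
  have h : DS N [] = {fun i => i.elim0} := by
    apply Finset.eq_singleton_iff_unique_mem.mpr
    constructor
    · rw [mem_DS]
      refine ⟨fun i => i.elim0, fun i => i.elim0, fun i => i.elim0⟩
    · intro m _; funext i; exact i.elim0
  rw [Zr, h, Finset.sum_singleton, term]
  simp

lemma strictAnti_cons {n : ℕ} {a : ℕ} {m : Fin n → ℕ} (hm : StrictAnti m)
    (ha : ∀ i, m i < a) : StrictAnti (Fin.cons a m : Fin (n+1) → ℕ) := by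
  intro i j hij
  induction j using Fin.cases with
  | zero => exact absurd hij (Fin.not_lt_zero i)
  | succ j =>
    induction i using Fin.cases with
    | zero => simpa using ha j
    | succ i =>
      simp only [Fin.cons_succ]
      exact hm (Fin.succ_lt_succ_iff.mp hij)

lemma strictAnti_tail {n : ℕ} {g : Fin (n+1) → ℕ} (hg : StrictAnti g) :
    StrictAnti (Fin.tail g) := fun i j hij => hg (Fin.succ_lt_succ_iff.mpr hij)

lemma term_cons (k : ℕ+) (t : List ℕ+) (a : ℕ) (m : Fin t.length → ℕ) :
    term (k :: t) (Fin.cons a m) = (1 / (a:ℝ) ^ (k:ℕ)) * term t m := by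
  rw [term]
  refine Eq.trans (Fin.prod_univ_succ _) ?_
  rw [term]
  simp

lemma Zr_cons (N : ℕ) (k : ℕ+) (t : List ℕ+) :
    Zr N (k :: t) = ∑ a ∈ Finset.Ico 1 N, (1 / (a:ℝ) ^ (k:ℕ)) * Zr a t := by
  have hz : ∀ a : ℕ, (1/(a:ℝ)^(k:ℕ)) * Zr a t = ∑ m ∈ DS a t, (1/(a:ℝ)^(k:ℕ)) * term t m :=
    fun a => by rw [Zr, Finset.mul_sum]
  rw [Zr, Finset.sum_congr rfl (fun a _ => hz a), Finset.sum_sigma']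
  refine Finset.sum_nbij' (fun m => (⟨m (0 : Fin (t.length+1)), Fin.tail m⟩ : Σ _ : ℕ, (Fin t.length → ℕ)))
    (fun x => Fin.cons x.1 x.2) ?_ ?_ ?_ ?_ ?_
  · intro m hm
    rw [mem_DS] at hm
    obtain ⟨h1, h2, h3⟩ := hm
    refine Finset.mem_sigma.mpr ⟨Finset.mem_Ico.mpr ⟨h2 (0 : Fin (t.length+1)), h3 (0 : Fin (t.length+1))⟩, mem_DS.mpr
      ⟨strictAnti_tail h1, fun i => h2 i.succ, fun i => h1 (Fin.succ_pos i)⟩⟩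
  · intro x hx
    rw [Finset.mem_sigma, Finset.mem_Ico] at hx
    obtain ⟨⟨ha1, ha2⟩, hx2⟩ := hx
    rw [mem_DS] at hx2 ⊢
    obtain ⟨h1, h2, h3⟩ := hx2
    refine ⟨strictAnti_cons h1 h3, ?_, ?_⟩
    · intro i
      induction i using Fin.cases with
      | zero => simpa using ha1
      | succ i => simpa using h2 i
    · intro i
      induction i using Fin.cases with
      | zero => simpa using ha2
      | succ i => exact lt_trans (by simpa using (strictAnti_cons h1 h3 (Fin.succ_pos i))) ha2
  · intro m _; exact Fin.cons_self_tail m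
  · intro x _
    refine Sigma.ext rfl (heq_of_eq ?_)
    simp [Fin.tail_cons]
  · intro m hm
    conv_lhs => rw [← Fin.cons_self_tail m]
    rw [term_cons]

lemma qsh_nil_left (w : List ℕ+) : qsh [] w = Finsupp.single w 1 := by rw [qsh]

lemma qsh_nil_right (u : List ℕ+) : qsh u [] = Finsupp.single u 1 := by
  cases u with
  | nil => rw [qsh]
  | cons m u => rw [qsh]; simp

lemma qsh_cons (m n : ℕ+) (u v : List ℕ+) : qsh (m :: u) (n :: v) =
      Finsupp.mapDomain (fun w => m :: w) (qsh u (n :: v)) +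
      Finsupp.mapDomain (fun w => n :: w) (qsh (m :: u) v) +
      Finsupp.mapDomain (fun w => (m + n) :: w) (qsh u v) := by rw [qsh]

noncomputable def LN (N : ℕ) (f : List ℕ+ →₀ ℚ) : ℝ := f.sum fun w c => (c : ℝ) * Zr N w

lemma LN_single (N : ℕ) (w : List ℕ+) : LN N (Finsupp.single w 1) = Zr N w := by
  rw [LN, Finsupp.sum_single_index] <;> simp

lemma LN_add (N : ℕ) (f g : List ℕ+ →₀ ℚ) : LN N (f + g) = LN N f + LN N g := by
  rw [LN, LN, LN, Finsupp.sum_add_index'] <;> intros <;> push_cast <;> ring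

lemma LN_mapDomain (N : ℕ) (k : ℕ+) (f : List ℕ+ →₀ ℚ) :
    LN N (Finsupp.mapDomain (fun w => k :: w) f) =
      ∑ a ∈ Finset.Ico 1 N, (1 / (a:ℝ) ^ (k:ℕ)) * LN a f := by
  rw [LN, Finsupp.sum_mapDomain_index (by simp) (by intros; push_cast; ring)]
  have : ∀ w ∈ f.support, (f w : ℝ) * Zr N (k :: w)
      = ∑ a ∈ Finset.Ico 1 N, (1/(a:ℝ)^(k:ℕ)) * ((f w : ℝ) * Zr a w) := by
    intro w _
    rw [Zr_cons, Finset.mul_sum]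
    exact Finset.sum_congr rfl fun a _ => by ring
  rw [Finsupp.sum, Finset.sum_congr rfl this, Finset.sum_comm]
  exact Finset.sum_congr rfl fun a _ => by rw [← Finset.mul_sum]; rfl

lemma tri (N : ℕ) (F : ℕ → ℕ → ℝ) :
    (∑ a ∈ Finset.Ico 1 N, ∑ b ∈ Finset.Ico 1 N, F a b) =
      ((∑ a ∈ Finset.Ico 1 N, ∑ b ∈ Finset.Ico 1 a, F a b) +
        (∑ b ∈ Finset.Ico 1 N, ∑ a ∈ Finset.Ico 1 b, F a b)) +
        ∑ a ∈ Finset.Ico 1 N, F a a := by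
  have h1 : ∀ a ∈ Finset.Ico 1 N, ∑ b ∈ Finset.Ico 1 N, F a b
      = ∑ b ∈ Finset.Ico 1 a, F a b + (F a a + ∑ b ∈ Finset.Ico (a+1) N, F a b) := by
    intro a ha
    rw [Finset.mem_Ico] at ha
    rw [← Finset.sum_Ico_consecutive _ ha.1 (le_of_lt ha.2),
      Finset.sum_eq_sum_Ico_succ_bot ha.2]
  rw [Finset.sum_congr rfl h1, Finset.sum_add_distrib, Finset.sum_add_distrib,
    Finset.sum_Ico_Ico_comm' 1 N F]
  ring

lemma key : ∀ (n : ℕ) (u v : List ℕ+), u.length + v.length = n →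
    ∀ N, Zr N u * Zr N v = LN N (qsh u v) := by
  intro n
  induction n using Nat.strong_induction_on with
  | _ n ih =>
    intro u v hlen N
    match u, v with
    | [], v => rw [qsh_nil_left, LN_single, Zr_nil, one_mul]
    | (m :: u), [] => rw [qsh_nil_right, LN_single, Zr_nil, mul_one]
    | (m :: u), (n' :: v) =>
      have hu : u.length + (n' :: v).length < n := by
        simp only [List.length_cons] at hlen ⊢; omega
      have hv : (m :: u).length + v.length < n := by
        simp only [List.length_cons] at hlen ⊢; omega
      have huv : u.length + v.length < n := by
        simp only [List.length_cons] at hlen ⊢; omega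
      rw [Zr_cons N m u, Zr_cons N n' v, Finset.sum_mul_sum, tri]
      rw [qsh_cons, LN_add, LN_add, LN_mapDomain, LN_mapDomain, LN_mapDomain]
      congr 1
      · congr 1
        · refine Finset.sum_congr rfl fun a ha => ?_
          rw [Finset.mem_Ico] at ha
          rw [← ih _ hu u (n' :: v) rfl a, Zr_cons a n' v, Finset.mul_sum, Finset.mul_sum]
          exact Finset.sum_congr rfl fun b _ => by ring
        · refine Finset.sum_congr rfl fun b hb => ?_
          rw [Finset.mem_Ico] at hb
          rw [← ih _ hv (m :: u) v rfl b, Zr_cons b m u, Finset.sum_mul, Finset.mul_sum]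
          exact Finset.sum_congr rfl fun a _ => by ring
      · refine Finset.sum_congr rfl fun a ha => ?_
        rw [← ih _ huv u v rfl a]
        have : ((((m + n') : ℕ+) : ℕ)) = (m : ℕ) + (n' : ℕ) := by push_cast; ring
        rw [this, pow_add, one_div, one_div, one_div, mul_inv]
        ring

lemma log_incr (N : ℕ) (hN : 1 ≤ N) :
    1/((N:ℝ)+1) ≤ Real.log ((N:ℝ)+1) - Real.log N := by
  have hN0 : (0:ℝ) < N := by exact_mod_cast hN
  have h1 : (0:ℝ) < (N:ℝ)+1 := by linarith
  have h := Real.log_le_sub_one_of_pos (x := (N:ℝ)/((N:ℝ)+1)) (by positivity)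
  rw [Real.log_div (ne_of_gt hN0) (ne_of_gt h1)] at h
  have : (N:ℝ)/((N:ℝ)+1) - 1 = -(1/((N:ℝ)+1)) := by field_simp; ring
  rw [this] at h
  linarith

lemma Hb : ∀ N : ℕ, ∑ a ∈ Finset.Ico 1 (N+1), (1:ℝ)/a ≤ 1 + Real.log (N:ℝ) := by
  intro N
  induction N with
  | zero => simp
  | succ N ih =>
    rcases Nat.eq_zero_or_pos N with h | h
    · subst h
      norm_num [Finset.sum_Ico_eq_sum_range]
    · rw [Finset.sum_Ico_succ_top (by omega)]
      have := log_incr N h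
      push_cast
      push_cast at ih
      linarith

lemma sum_inv_le (N : ℕ) : ∑ a ∈ Finset.Ico 1 N, (1:ℝ)/a ≤ 1 + Real.log N := by
  cases N with
  | zero => simp
  | succ M =>
    refine (Hb M).trans ?_
    have : Real.log (M:ℝ) ≤ Real.log ((M:ℝ)+1) := by
      rcases Nat.eq_zero_or_pos M with h | h
      · subst h; simp
      · apply Real.log_le_log (by exact_mod_cast h); linarith
    push_cast
    linarith

lemma Zr_le_log : ∀ (w : List ℕ+) (N : ℕ), 1 ≤ N →
    Zr N w ≤ (1 + Real.log N) ^ w.length := by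
  intro w
  induction w with
  | nil => intro N hN; rw [Zr_nil]; simp
  | cons k t ih =>
    intro N hN
    have hlogN : (0:ℝ) ≤ 1 + Real.log N := by
      have : (0:ℝ) ≤ Real.log N := Real.log_natCast_nonneg N
      linarith
    rw [Zr_cons]
    have hstep : ∀ a ∈ Finset.Ico 1 N, (1/(a:ℝ)^(k:ℕ)) * Zr a t
        ≤ (1 + Real.log N) ^ t.length * (1/(a:ℝ)) := by
      intro a ha
      rw [Finset.mem_Ico] at ha
      have ha0 : (0:ℝ) < a := by exact_mod_cast ha.1
      have h1 : (1:ℝ)/(a:ℝ)^(k:ℕ) ≤ 1/(a:ℝ) := by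
        apply one_div_le_one_div_of_le ha0
        calc (a:ℝ) = (a:ℝ)^1 := (pow_one _).symm
        _ ≤ (a:ℝ)^(k:ℕ) := by
            apply pow_le_pow_right₀ (by exact_mod_cast ha.1) k.one_le
      have h2 : Zr a t ≤ (1 + Real.log a) ^ t.length := ih a ha.1
      have h3 : (1 + Real.log a) ^ t.length ≤ (1 + Real.log N) ^ t.length := by
        apply pow_le_pow_left₀
        · have : (0:ℝ) ≤ Real.log a := Real.log_natCast_nonneg a
          linarith
        · have : Real.log (a:ℝ) ≤ Real.log (N:ℝ) := by
            apply Real.log_le_log ha0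
            exact_mod_cast le_of_lt ha.2
          linarith
      calc (1/(a:ℝ)^(k:ℕ)) * Zr a t ≤ (1/(a:ℝ)) * ((1 + Real.log N) ^ t.length) := by
            apply mul_le_mul h1 (h2.trans h3) (Zr_nonneg a t) (by positivity)
      _ = (1 + Real.log N) ^ t.length * (1/(a:ℝ)) := by ring
    calc ∑ a ∈ Finset.Ico 1 N, (1/(a:ℝ)^(k:ℕ)) * Zr a t
        ≤ ∑ a ∈ Finset.Ico 1 N, (1 + Real.log N) ^ t.length * (1/(a:ℝ)) :=
        Finset.sum_le_sum hstep
    _ = (1 + Real.log N) ^ t.length * ∑ a ∈ Finset.Ico 1 N, (1:ℝ)/(a:ℝ) := by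
        rw [Finset.mul_sum]
    _ ≤ (1 + Real.log N) ^ t.length * (1 + Real.log N) := by
        apply mul_le_mul_of_nonneg_left (sum_inv_le N) (by positivity)
    _ = (1 + Real.log N) ^ (k :: t).length := by
        rw [List.length_cons, pow_succ]

lemma log_pow_bound (L : ℕ) (a : ℕ) (ha : 1 ≤ a) :
    (1 + Real.log a) ^ L ≤ ((2*(L:ℝ)+3)) ^ L * (a:ℝ) ^ ((1:ℝ)/2) := by
  have ha0 : (0:ℝ) < a := by exact_mod_cast ha
  have ha1 : (1:ℝ) ≤ a := by exact_mod_cast ha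
  set e : ℝ := 1/(2*(L:ℝ)+2) with he
  have he0 : 0 < e := by positivity
  have hae1 : (1:ℝ) ≤ (a:ℝ) ^ e := Real.one_le_rpow ha1 (le_of_lt he0)
  -- log a ≤ (1/e) * a^e
  have hlog : Real.log a ≤ (1/e) * (a:ℝ) ^ e := by
    have h1 : Real.log ((a:ℝ) ^ e) = e * Real.log a := Real.log_rpow ha0 e
    have h2 : Real.log ((a:ℝ) ^ e) ≤ (a:ℝ) ^ e - 1 :=
      Real.log_le_sub_one_of_pos (Real.rpow_pos_of_pos ha0 e)
    have h3 : e * Real.log a ≤ (a:ℝ) ^ e := by rw [← h1]; linarith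
    rw [div_mul_eq_mul_div, le_div_iff₀ he0]
    calc Real.log a * e = e * Real.log a := mul_comm _ _
    _ ≤ (a:ℝ) ^ e := h3
    _ ≤ 1 * (a:ℝ) ^ e := by rw [one_mul]
  have hkey : 1 + Real.log a ≤ (2*(L:ℝ)+3) * (a:ℝ) ^ e := by
    have h1e : (1:ℝ)/e = 2*(L:ℝ)+2 := by rw [he]; field_simp
    have : Real.log a ≤ (2*(L:ℝ)+2) * (a:ℝ) ^ e := by rw [← h1e]; exact hlog
    nlinarith [hae1]
  have hpow : (1 + Real.log a) ^ L ≤ ((2*(L:ℝ)+3) * (a:ℝ) ^ e) ^ L := by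
    apply pow_le_pow_left₀ ?_ hkey
    have : (0:ℝ) ≤ Real.log a := Real.log_natCast_nonneg a
    linarith
  refine hpow.trans ?_
  rw [mul_pow]
  apply mul_le_mul_of_nonneg_left ?_ (by positivity)
  rw [← Real.rpow_natCast ((a:ℝ) ^ e) L, ← Real.rpow_mul (le_of_lt ha0)]
  apply Real.rpow_le_rpow_of_exponent_le ha1
  rw [he]
  rcases Nat.eq_zero_or_pos L with h | h
  · subst h; norm_num
  · have hL1 : (1:ℝ) ≤ L := by exact_mod_cast h
    rw [div_mul_eq_mul_div, div_le_iff₀ (by positivity)]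
    nlinarith

lemma Zr_bound_conv (w : List ℕ+) (hw : ConvergentWord w) : ∃ C : ℝ, ∀ N, Zr N w ≤ C := by
  cases w with
  | nil => exact ⟨1, fun N => le_of_eq (Zr_nil N)⟩
  | cons k t =>
    have hk : 2 ≤ (k:ℕ) := hw k rfl
    set L := t.length with hL
    set D : ℝ := (2*(L:ℝ)+3) ^ L with hD
    have hD0 : 0 ≤ D := by positivity
    set g : ℕ → ℝ := fun a => (a:ℝ) ^ (-(3/2) : ℝ) with hg
    have hgs : Summable g := Real.summable_nat_rpow.mpr (by norm_num)
    refine ⟨D * ∑' a, g a, fun N => ?_⟩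
    rw [Zr_cons]
    have hstep : ∀ a ∈ Finset.Ico 1 N, (1/(a:ℝ)^(k:ℕ)) * Zr a t ≤ D * g a := by
      intro a ha
      rw [Finset.mem_Ico] at ha
      have ha0 : (0:ℝ) < a := by exact_mod_cast ha.1
      have ha1 : (1:ℝ) ≤ a := by exact_mod_cast ha.1
      have h1 : (1:ℝ)/(a:ℝ)^(k:ℕ) ≤ 1/(a:ℝ)^2 := by
        apply one_div_le_one_div_of_le (by positivity)
        exact pow_le_pow_right₀ ha1 hk
      have h2 : Zr a t ≤ (1 + Real.log a) ^ L := Zr_le_log t a ha.1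
      have h3 : (1/(a:ℝ)^2) * ((1 + Real.log a) ^ L) ≤ D * g a := by
        have h4 := log_pow_bound L a ha.1
        have h5 : (1/(a:ℝ)^2) * ((1 + Real.log a) ^ L)
            ≤ (1/(a:ℝ)^2) * (D * (a:ℝ) ^ ((1:ℝ)/2)) := by
          apply mul_le_mul_of_nonneg_left h4 (by positivity)
        refine h5.trans (le_of_eq ?_)
        have h2a : (1:ℝ)/(a:ℝ)^2 = (a:ℝ) ^ (-2 : ℝ) := by
          rw [Real.rpow_neg (le_of_lt ha0), ← Real.rpow_natCast (a:ℝ) 2]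
          norm_num
        have hsplit : g a = (a:ℝ) ^ (-2 : ℝ) * (a:ℝ) ^ ((1:ℝ)/2) := by
          simp only [hg]
          rw [← Real.rpow_add ha0]
          norm_num
        rw [h2a, hsplit]
        ring
      calc (1/(a:ℝ)^(k:ℕ)) * Zr a t ≤ (1/(a:ℝ)^2) * ((1 + Real.log a) ^ L) :=
            mul_le_mul h1 h2 (Zr_nonneg a t) (by positivity)
      _ ≤ D * g a := h3
    calc ∑ a ∈ Finset.Ico 1 N, (1/(a:ℝ)^(k:ℕ)) * Zr a t
        ≤ ∑ a ∈ Finset.Ico 1 N, D * g a := Finset.sum_le_sum hstep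
    _ = D * ∑ a ∈ Finset.Ico 1 N, g a := by rw [Finset.mul_sum]
    _ ≤ D * ∑' a, g a := by
        apply mul_le_mul_of_nonneg_left ?_ hD0
        apply Summable.sum_le_tsum _ ?_ hgs
        intro a _
        simp only [hg]
        positivity

lemma mzvWord_eq (w : List ℕ+) :
    mzvWord w = ∑' m : {m : Fin w.length → ℕ // StrictAnti m ∧ ∀ i, 1 ≤ m i}, term w m.1 :=
  rfl

lemma summable_conv (w : List ℕ+) (hw : ConvergentWord w) :
    Summable (fun m : {m : Fin w.length → ℕ // StrictAnti m ∧ ∀ i, 1 ≤ m i} => term w m.1) := by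
  obtain ⟨C, hC⟩ := Zr_bound_conv w hw
  refine summable_of_sum_le (c := C) ?_ (fun F => ?_)
  · intro m
    exact term_nonneg w m.1
  have hinj : Function.Injective
      (Subtype.val : {m : Fin w.length → ℕ // StrictAnti m ∧ ∀ i, 1 ≤ m i} → _) :=
    Subtype.val_injective
  rw [show (∑ x ∈ F, term w ↑x) = ∑ g ∈ F.image Subtype.val, term w g from
    (Finset.sum_image (fun x _ y _ h => hinj h)).symm]
  set N : ℕ := 1 + (F.image Subtype.val).sup (fun g => Finset.univ.sup g) with hN
  have hsub : F.image Subtype.val ⊆ DS N w := by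
    intro g hg
    rw [Finset.mem_image] at hg
    obtain ⟨m, hm, rfl⟩ := hg
    rw [mem_DS]
    refine ⟨m.2.1, m.2.2, fun i => ?_⟩
    have h1 : m.1 i ≤ Finset.univ.sup m.1 := Finset.le_sup (Finset.mem_univ i)
    have h2 : Finset.univ.sup m.1 ≤ (F.image Subtype.val).sup (fun g => Finset.univ.sup g) :=
      Finset.le_sup (f := fun g => Finset.univ.sup g) (Finset.mem_image_of_mem _ hm)
    omega
  refine le_trans (Finset.sum_le_sum_of_subset_of_nonneg hsub
    (fun m _ _ => term_nonneg w m)) (hC N)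

lemma tendsto_Zr (w : List ℕ+) (hw : ConvergentWord w) :
    Filter.Tendsto (fun N => Zr N w) Filter.atTop (nhds (mzvWord w)) := by
  classical
  have hsum := summable_conv w hw
  set p : (Fin w.length → ℕ) → Prop := fun m => StrictAnti m ∧ ∀ i, 1 ≤ m i with hp
  set S : ℕ → Finset {m : Fin w.length → ℕ // p m} := fun N => (DS N w).subtype p with hS
  have hsum_eq : ∀ N, ∑ m ∈ S N, term w m.1 = Zr N w := by
    intro N
    rw [hS, Zr]
    rw [Finset.sum_subtype_eq_sum_filter]
    congr 1
    apply Finset.filter_true_of_mem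
    intro m hm
    rw [mem_DS] at hm
    exact ⟨hm.1, hm.2.1⟩
  have hmono : Monotone S := by
    intro N M hNM x hx
    rw [hS, Finset.mem_subtype] at hx ⊢
    rw [mem_DS] at hx ⊢
    exact ⟨hx.1, hx.2.1, fun i => lt_of_lt_of_le (hx.2.2 i) hNM⟩
  have hexh : ∀ x : {m : Fin w.length → ℕ // p m}, ∃ N, x ∈ S N := by
    intro x
    refine ⟨1 + Finset.univ.sup x.1, ?_⟩
    rw [hS, Finset.mem_subtype, mem_DS]
    refine ⟨x.2.1, x.2.2, fun i => ?_⟩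
    have : x.1 i ≤ Finset.univ.sup x.1 := Finset.le_sup (Finset.mem_univ i)
    omega
  have htend : Filter.Tendsto S Filter.atTop Filter.atTop :=
    Filter.tendsto_atTop_finset_of_monotone hmono hexh
  have := (hsum.hasSum.comp htend)
  rw [mzvWord_eq]
  refine Filter.Tendsto.congr ?_ this
  intro N
  exact hsum_eq N

lemma qsh_support_head (u v : List ℕ+) :
    ∀ w ∈ (qsh u v).support, w.head? = u.head? ∨ w.head? = v.head? ∨
      ∃ a b : ℕ+, u.head? = some a ∧ v.head? = some b ∧ w.head? = some (a + b) := by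
  match u, v with
  | [], v =>
    intro w hw
    rw [qsh_nil_left] at hw
    have := Finsupp.support_single_subset hw
    rw [Finset.mem_singleton] at this
    subst this
    exact Or.inr (Or.inl rfl)
  | (m :: u), [] =>
    intro w hw
    rw [qsh_nil_right] at hw
    have := Finsupp.support_single_subset hw
    rw [Finset.mem_singleton] at this
    subst this
    exact Or.inl rfl
  | (m :: u), (n :: v) =>
    intro w hw
    rw [qsh_cons] at hw
    rcases Finset.mem_union.mp (Finsupp.support_add hw) with hw' | hw'
    · rcases Finset.mem_union.mp (Finsupp.support_add hw') with hw'' | hw''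
      · obtain ⟨w', _, rfl⟩ := Finset.mem_image.mp (Finsupp.mapDomain_support hw'')
        exact Or.inl rfl
      · obtain ⟨w', _, rfl⟩ := Finset.mem_image.mp (Finsupp.mapDomain_support hw'')
        exact Or.inr (Or.inl rfl)
    · obtain ⟨w', _, rfl⟩ := Finset.mem_image.mp (Finsupp.mapDomain_support hw')
      exact Or.inr (Or.inr ⟨m, n, rfl, rfl, rfl⟩)

lemma qsh_support_conv (u v : List ℕ+) (hu : ConvergentWord u) (hv : ConvergentWord v) :
    ∀ w ∈ (qsh u v).support, ConvergentWord w := by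
  intro w hw k hk
  rcases qsh_support_head u v w hw with h | h | ⟨a, b, ha, hb, h⟩
  · exact hu k (by rw [← h]; exact hk)
  · exact hv k (by rw [← h]; exact hk)
  · have hk' : k = a + b := by
      rw [h] at hk
      simpa using hk.symm
    have ha2 : 2 ≤ (a:ℕ) := hu a (by rw [ha]; rfl)
    subst hk'
    push_cast
    omega

end ZQ

/-- `ζ*` is an algebra morphism for the quasi-shuffle product: for
convergent words `u` and `v`, the quasi-shuffle `u ∗ v` is a linear combination of
convergent words and `ζ*(u ∗ v) = ζ*(u) · ζ*(v)`. -/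
theorem zetaStar_qsh_mul (u v : List ℕ+)
    (hu : ConvergentWord u) (hv : ConvergentWord v) :
    (∀ w ∈ (qsh u v).support, ConvergentWord w) ∧
    zetaStar (qsh u v) = mzvWord u * mzvWord v := by
  refine ⟨ZQ.qsh_support_conv u v hu hv, ?_⟩
  have h1 : Filter.Tendsto (fun N => ZQ.Zr N u * ZQ.Zr N v) Filter.atTop
      (nhds (mzvWord u * mzvWord v)) := (ZQ.tendsto_Zr u hu).mul (ZQ.tendsto_Zr v hv)
  have h2 : (fun N => ZQ.Zr N u * ZQ.Zr N v) = fun N => ZQ.LN N (qsh u v) :=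
    funext fun N => ZQ.key (u.length + v.length) u v rfl N
  rw [h2] at h1
  have h3 : Filter.Tendsto (fun N => ZQ.LN N (qsh u v)) Filter.atTop
      (nhds (zetaStar (qsh u v))) := by
    have e1 : zetaStar (qsh u v)
        = ∑ w ∈ (qsh u v).support, (((qsh u v) w : ℚ) : ℝ) * mzvWord w := rfl
    have e2 : ∀ N, ZQ.LN N (qsh u v)
        = ∑ w ∈ (qsh u v).support, (((qsh u v) w : ℚ) : ℝ) * ZQ.Zr N w := fun _ => rfl
    rw [e1]
    refine Filter.Tendsto.congr (fun N => (e2 N).symm) ?_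
    apply tendsto_finset_sum
    intro w hw
    exact Filter.Tendsto.mul tendsto_const_nhds
      (ZQ.tendsto_Zr w (ZQ.qsh_support_conv u v hu hv w hw))
  exact tendsto_nhds_unique h3 h1
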